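/- Let S be an imprecise minimum on a regular imprecise terrain and x any proxy of S. Then the intersection over all nonempty subsets Q ⊆ S of PsWS(Q) equals PsWS(x). -/

import Mathlib

open scoped Classical
open Set

/-- An imprecise terrain: a finite geometric graph with nodes in the plane,
each node carrying an elevation interval `[low v, high v]`. -/
structure ImpTerrain (V : Type) [Fintype V] [DecidableEq V] where
  pos : V → ℝ × ℝ
  posInj : Function.Injective pos
  adj : V → V → Prop
  adj_symm : ∀ u v, adj u v → adj v u
  adj_irrefl : ∀ v, ¬ adj v v
  low : V → ℝ
  high : V → ℝ

namespace ImpTerrain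

variable {V : Type} [Fintype V] [DecidableEq V]

/-- A realization assigns to each node an elevation within its interval. -/
def IsRealization (T : ImpTerrain V) (R : V → ℝ) : Prop :=
  ∀ v, T.low v ≤ R v ∧ R v ≤ T.high v

/-- Horizontal (plane) distance between two nodes. -/
noncomputable def hdist (T : ImpTerrain V) (u v : V) : ℝ := dist (T.pos u) (T.pos v)

/-- Slope (steepness of descent) of the edge from `p` to `q` in realization `R`. -/
noncomputable def slope (T : ImpTerrain V) (R : V → ℝ) (p q : V) : ℝ :=
  (R p - R q) / T.hdist p q

/-- `q` is a steepest-descent neighbor of `p` in `R`. -/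
def SDN (T : ImpTerrain V) (R : V → ℝ) (p q : V) : Prop :=
  T.adj p q ∧ 0 ≤ T.slope R p q ∧ ∀ r, T.adj p r → T.slope R p r ≤ T.slope R p q

/-- The neighborhood of a set of nodes. -/
def Nbhd (T : ImpTerrain V) (P : Set V) : Set V :=
  {s | s ∉ P ∧ ∃ t ∈ P, T.adj s t}

/-- `u` and `v` are connected by a path staying inside `P`. -/
def ConnIn (T : ImpTerrain V) (P : Set V) (u v : V) : Prop :=
  Relation.ReflTransGen (fun a b => T.adj a b ∧ a ∈ P ∧ b ∈ P) u v

/-- `P` is a local minimum in realization `R`: nonempty, connected, all nodes at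
the same elevation, strictly below its neighborhood. -/
def LocalMin (T : ImpTerrain V) (R : V → ℝ) (P : Set V) : Prop :=
  P.Nonempty ∧ (∀ u ∈ P, ∀ v ∈ P, T.ConnIn P u v) ∧
    (∀ u ∈ P, ∀ v ∈ P, R u = R v) ∧ (∀ u ∈ P, ∀ t ∈ T.Nbhd P, R u < R t)

def InLocalMin (T : ImpTerrain V) (R : V → ℝ) (p : V) : Prop :=
  ∃ P, T.LocalMin R P ∧ p ∈ P

/-- One step of discrete water flow. -/
def FlowStep (T : ImpTerrain V) (R : V → ℝ) (p q : V) : Prop :=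
  (∃ P, T.LocalMin R P ∧ p ∈ P ∧ q ∈ P ∧ T.adj p q) ∨
    (¬ T.InLocalMin R p ∧ T.SDN R p q)

/-- `p ⇝_R q` : water from `p` reaches `q` in realization `R`. -/
def FlowsTo (T : ImpTerrain V) (R : V → ℝ) : V → V → Prop :=
  Relation.ReflTransGen (T.FlowStep R)

/-- The (discrete) watershed of a set of nodes `Q` in realization `R`. -/
def WS (T : ImpTerrain V) (R : V → ℝ) (Q : Set V) : Set V :=
  {p | ∃ q ∈ Q, T.FlowsTo R p q}

/-- The potential watershed of `Q`. -/
def PoWS (T : ImpTerrain V) (Q : Set V) : Set V :=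
  {p | ∃ R, T.IsRealization R ∧ p ∈ T.WS R Q}

/-- A flow path: a simple path following steepest-descent edges that ends in,
and visits all nodes of, a local minimum. -/
def IsFlowPath (T : ImpTerrain V) (R : V → ℝ) (L : List V) : Prop :=
  L.Nodup ∧ L.Chain' (fun p q => T.SDN R p q) ∧
    ∃ P, T.LocalMin R P ∧ (∀ v ∈ P, v ∈ L) ∧ ∃ hne : L ≠ [], L.getLast hne ∈ P

/-- The `Q`-avoiding potential watershed of `S`: nodes having, in some
realization, a flow path to a node of `S` whose portion up to that node
avoids `Q`. -/
def AvWS (T : ImpTerrain V) (Q S : Set V) : Set V :=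
  {p | ∃ R, T.IsRealization R ∧ ∃ L, T.IsFlowPath R L ∧ ∃ s ∈ S,
    ∃ i j : Fin L.length, (i : ℕ) ≤ (j : ℕ) ∧ L.get i = p ∧ L.get j = s ∧
      ∀ k : Fin L.length, (i : ℕ) ≤ (k : ℕ) → (k : ℕ) ≤ (j : ℕ) → L.get k ∉ Q}

/-- The persistent watershed of `Q`. -/
def PsWS (T : ImpTerrain V) (Q : Set V) : Set V :=
  (T.AvWS Q (T.PoWS Q)ᶜ)ᶜ

/-- The core watershed of `Q`: nodes from which every induced flow path leads
to a node of `Q`. -/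
def CoWS (T : ImpTerrain V) (Q : Set V) : Set V :=
  {p | ∀ R, T.IsRealization R → ∀ L, T.IsFlowPath R L →
    ∀ i : Fin L.length, L.get i = p →
      ∃ q ∈ Q, ∃ j : Fin L.length, (i : ℕ) ≤ (j : ℕ) ∧ L.get j = q}

/-- Union of all node sets disjoint from `Q` that form a local minimum in some
realization. -/
def Vmin (T : ImpTerrain V) (Q : Set V) : Set V :=
  ⋃₀ {r | r ∩ Q = ∅ ∧ ∃ R, T.IsRealization R ∧ T.LocalMin R r}

/-- `S` contains a local minimum in every realization. -/
def AlwaysMin (T : ImpTerrain V) (S : Set V) : Prop :=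
  ∀ R, T.IsRealization R → ∃ P, T.LocalMin R P ∧ P ⊆ S

/-- An imprecise minimum: a minimal set containing a local minimum in every
realization. -/
def ImpreciseMin (T : ImpTerrain V) (S : Set V) : Prop :=
  T.AlwaysMin S ∧ ∀ S', S' ⊂ S → ¬ T.AlwaysMin S'

/-- A terrain is regular if every local minimum of the lowermost realization is
an imprecise minimum. -/
def Regular (T : ImpTerrain V) : Prop :=
  ∀ P, T.LocalMin T.low P → T.ImpreciseMin P

/-- A proxy of `S`: a node of `S` from which water can never reach a node
outside `S` in any realization. -/
def IsProxy (T : ImpTerrain V) (S : Set V) (p : V) : Prop :=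
  p ∈ S ∧ ∀ R, T.IsRealization R → ∀ q, q ∉ S → ¬ T.FlowsTo R p q

/-- `R'` is an `ε`-perturbation of `R`. -/
def Perturb (ε : ℝ) (R R' : V → ℝ) : Prop := ∀ v, |R' v - R v| ≤ ε

/-- `S` together with all `ε`-perturbations of its members (`S^ε`). -/
def Enlarge (S : Set (V → ℝ)) (ε : ℝ) : Set (V → ℝ) :=
  S ∪ {R' | ∃ R ∈ S, Perturb ε R R'}

/-- `Π(S)` : flow paths induced by realizations in `S`. -/
def FlowPathsOf (T : ImpTerrain V) (S : Set (V → ℝ)) : Set (List V) :=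
  {L | ∃ R ∈ S, T.IsFlowPath R L}

/-- A flow path is stable with respect to `S`. -/
def StableWrt (T : ImpTerrain V) (S : Set (V → ℝ)) (L : List V) : Prop :=
  ∃ ε > (0 : ℝ), ∃ R ∈ S, ∀ R', Perturb ε R R' → T.IsFlowPath R' L

/-- State of the sweep-plane minimum-removal algorithm. -/
structure SweepState (V : Type) where
  discovered : Set V
  final : V → Option ℝ
  proxies : Set V

def pendingS (st : SweepState V) (v : V) : Prop :=
  v ∈ st.discovered ∧ st.final v = none

/-- Pending component of `v`. -/
def pendComp (T : ImpTerrain V) (st : SweepState V) (v : V) : Set V :=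
  {u | Relation.ReflTransGen (fun a b => T.adj a b ∧ pendingS st a ∧ pendingS st b) v u}

/-- One step of the sweep algorithm, processing a `low` event `(v, false)` or a
`high` event `(v, true)`. -/
noncomputable def sweepStep (T : ImpTerrain V) (st : SweepState V) : V × Bool → SweepState V
  | (v, false) =>
    let st1 : SweepState V := ⟨insert v st.discovered, st.final, st.proxies⟩
    if ∃ u, T.adj v u ∧ (st.final u).isSome = true then
      ⟨st1.discovered,
        fun w => if w ∈ T.pendComp st1 v then some (T.low v) else st.final w,
        st.proxies⟩
    else st1
  | (v, true) =>
    if (st.final v).isSome = true then st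
    else
      ⟨st.discovered,
        fun w =>
          if w ∈ T.pendComp st v then some (sSup (T.low '' T.pendComp st v))
          else st.final w,
        insert v st.proxies⟩

noncomputable def sweepRun (T : ImpTerrain V) (evs : List (V × Bool)) : SweepState V :=
  evs.foldl T.sweepStep ⟨∅, fun _ => none, ∅⟩

/-- Elevation key of an event. -/
def eKey (T : ImpTerrain V) : V × Bool → ℝ
  | (v, false) => T.low v
  | (v, true) => T.high v

/-- A valid event list: all events, each once, sorted by elevation with low
events before high events at equal elevation. -/
def ValidEventList (T : ImpTerrain V) (evs : List (V × Bool)) : Prop :=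
  (∀ v : V, ∀ b : Bool, (v, b) ∈ evs) ∧ evs.Nodup ∧
    evs.Pairwise (fun e1 e2 =>
      T.eKey e1 < T.eKey e2 ∨ (T.eKey e1 = T.eKey e2 ∧ ¬(e1.2 = true ∧ e2.2 = false)))

/-- The realization `M` computed by the sweep algorithm. -/
noncomputable def sweepM (T : ImpTerrain V) (evs : List (V × Bool)) : V → ℝ :=
  fun v => ((T.sweepRun evs).final v).getD (T.high v)

end ImpTerrain


namespace ImpTerrain

variable {V : Type} [Fintype V] [DecidableEq V] (T : ImpTerrain V)

lemma hdist_pos' {p q : V} (h : T.adj p q) : 0 < T.hdist p q := by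
  have hpq : p ≠ q := by rintro rfl; exact T.adj_irrefl _ h
  exact dist_pos.2 fun hc => hpq (T.posInj hc)

lemma le_of_slope_nonneg {R : V → ℝ} {p q : V} (h : T.adj p q)
    (hs : 0 ≤ T.slope R p q) : R q ≤ R p := by
  by_contra hlt
  push_neg at hlt
  have : T.slope R p q < 0 :=
    div_neg_of_neg_of_pos (by linarith) (T.hdist_pos' h)
  linarith

lemma slope_nonneg_of_le {R : V → ℝ} {p q : V} (h : T.adj p q) (hq : R q ≤ R p) :
    0 ≤ T.slope R p q :=
  div_nonneg (by linarith) (T.hdist_pos' h).le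

lemma slope_mono {R1 R2 : V → ℝ} {p q : V} (h : T.adj p q)
    (h1 : R1 p ≤ R2 p) (h2 : R2 q ≤ R1 q) : T.slope R1 p q ≤ T.slope R2 p q := by
  have hd := T.hdist_pos' h
  have : R1 p - R1 q ≤ R2 p - R2 q := by linarith
  exact div_le_div_of_nonneg_right this hd.le

lemma localMin_subset {R : V → ℝ} {P P2 : Set V} (hP : T.LocalMin R P)
    (hP2 : T.LocalMin R P2) {v : V} (hv : v ∈ P) (hv2 : v ∈ P2) : P ⊆ P2 := by
  intro u hu
  have hconn := hP.2.1 v hv u hu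
  clear hu
  induction hconn with
  | refl => exact hv2
  | @tail b c _ hbc ih =>
    by_contra hc
    have hN : c ∈ T.Nbhd P2 := ⟨hc, b, ih, T.adj_symm _ _ hbc.1⟩
    have h1 := hP2.2.2.2 b ih c hN
    have h2 := hP.2.2.1 b hbc.2.1 c hbc.2.2
    linarith

lemma localMin_flowStep_mem {R : V → ℝ} {P : Set V} (hP : T.LocalMin R P) {v w : V}
    (hv : v ∈ P) (h : T.FlowStep R v w) : w ∈ P := by
  rcases h with ⟨P2, hP2, hv2, hw2, _⟩ | ⟨hn, _⟩
  · exact T.localMin_subset hP2 hP hv2 hv hw2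
  · exact absurd ⟨P, hP, hv⟩ hn

lemma localMin_flowsTo_mem {R : V → ℝ} {P : Set V} (hP : T.LocalMin R P) {v y : V}
    (hv : v ∈ P) (h : T.FlowsTo R v y) : y ∈ P := by
  induction h with
  | refl => exact hv
  | tail _ hbc ih => exact T.localMin_flowStep_mem hP ih hbc

lemma sdn_flowStep {R : V → ℝ} {p q : V} (h : T.SDN R p q) : T.FlowStep R p q := by
  by_cases hin : T.InLocalMin R p
  · obtain ⟨P, hP, hpP⟩ := hin
    left
    refine ⟨P, hP, hpP, ?_, h.1⟩
    by_contra hq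
    have hN : q ∈ T.Nbhd P := ⟨hq, p, hpP, T.adj_symm _ _ h.1⟩
    have h1 := hP.2.2.2 p hpP q hN
    have h2 := T.le_of_slope_nonneg h.1 h.2.1
    linarith
  · exact Or.inr ⟨hin, h⟩

lemma localMin_flowsTo {R : V → ℝ} {P : Set V} (hP : T.LocalMin R P) {u q : V}
    (hu : u ∈ P) (hq : q ∈ P) : T.FlowsTo R u q :=
  Relation.ReflTransGen.mono (fun a b hab => Or.inl ⟨P, hP, hab.2.1, hab.2.2, hab.1⟩) u q
    (hP.2.1 u hu q hq)

lemma flowStep_ws {R : V → ℝ} {Q : Set V} {v w : V} (h : T.FlowStep R v w)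
    (hw : w ∈ T.WS R Q) : v ∈ T.WS R Q := by
  obtain ⟨q, hq, hf⟩ := hw
  exact ⟨q, hq, Relation.ReflTransGen.head h hf⟩

lemma regular_localMin_low (hle : ∀ v, T.low v ≤ T.high v) (hreg : T.Regular)
    {S : Set V} (hS : T.ImpreciseMin S) : T.LocalMin T.low S := by
  obtain ⟨P, hP, hPS⟩ := hS.1 T.low (fun v => ⟨le_rfl, hle v⟩)
  by_cases h : P = S
  · exact h ▸ hP
  · exact absurd (hreg P hP).1 (hS.2 P (Set.ssubset_iff_subset_ne.2 ⟨hPS, h⟩))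

lemma proxy_pows_subset (hle : ∀ v, T.low v ≤ T.high v) (hreg : T.Regular)
    {S : Set V} (hS : T.ImpreciseMin S) {x : V} (hx : T.IsProxy S x)
    {Q : Set V} (hQS : Q ⊆ S) (hQne : Q.Nonempty) :
    T.PoWS {x} ⊆ T.PoWS Q := by
  obtain ⟨q0, hq0⟩ := hQne
  have hSloc := T.regular_localMin_low hle hreg hS
  have hxS := hx.1
  intro s hs
  obtain ⟨R', hR', x', hx', hflow⟩ := hs
  rw [Set.mem_singleton_iff] at hx'
  replace hflow : T.FlowsTo R' s x := hx' ▸ hflow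
  clear hx'
  classical
  set R'' : V → ℝ := fun v => if v ∈ S then T.low x else R' v with hR''def
  have hconst : ∀ u ∈ S, T.low u = T.low x := fun u hu => hSloc.2.2.1 u hu x hxS
  have hR''S : ∀ u ∈ S, R'' u = T.low x := fun u hu => if_pos hu
  have hR''nS : ∀ u, u ∉ S → R'' u = R' u := fun u hu => if_neg hu
  have hR''le : ∀ u, R'' u ≤ R' u := by
    intro u
    by_cases hu : u ∈ S
    · rw [hR''S u hu, ← hconst u hu]; exact (hR' u).1
    · rw [hR''nS u hu]
  have hreal'' : T.IsRealization R'' := by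
    intro v
    by_cases hv : v ∈ S
    · rw [hR''S v hv, ← hconst v hv]; exact ⟨le_rfl, hle v⟩
    · rw [hR''nS v hv]; exact hR' v
  have hSloc'' : T.LocalMin R'' S := by
    refine ⟨⟨x, hxS⟩, hSloc.2.1, ?_, ?_⟩
    · intro u hu v hv; rw [hR''S u hu, hR''S v hv]
    · intro u hu t ht
      rw [hR''S u hu, hR''nS t ht.1]
      have h1 := hSloc.2.2.2 x hxS t ht
      have h2 := (hR' t).1
      linarith
  have hWSS : ∀ w ∈ S, w ∈ T.WS R'' Q :=
    fun w hw => ⟨q0, hq0, T.localMin_flowsTo hSloc'' hw (hQS hq0)⟩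
  refine ⟨R'', hreal'', ?_⟩
  induction hflow using Relation.ReflTransGen.head_induction_on with
  | refl => exact hWSS x hxS
  | @head u c h' hfl ih =>
    by_cases huS : u ∈ S
    · exact hWSS u huS
    · rcases h' with ⟨P, hP, huP, hcP, hadj⟩ | ⟨hnin, hsdn⟩
      · -- plateau case: the whole flow from u stays in the local minimum P, so x ∈ P
        have hxP : x ∈ P := T.localMin_flowsTo_mem hP hcP hfl
        have hconnux := hP.2.1 u huP x hxP
        clear ih hfl hcP hadj huP huS
        induction hconnux using Relation.ReflTransGen.head_induction_on with
        | refl => exact hWSS x hxS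
        | @head v v' h2 hconn ih2 =>
          obtain ⟨hadjvv', hvP, hv'P⟩ := h2
          by_cases hvS : v ∈ S
          · exact hWSS v hvS
          · have hd := T.hdist_pos' hadjvv'
            obtain ⟨w, hwN, hwmax⟩ :=
              Finset.exists_max_image (Finset.univ.filter fun r => T.adj v r)
                (fun r => T.slope R'' v r)
                ⟨v', Finset.mem_filter.2 ⟨Finset.mem_univ _, hadjvv'⟩⟩
            have hadjvw : T.adj v w := (Finset.mem_filter.1 hwN).2
            have hmax : ∀ r, T.adj v r → T.slope R'' v r ≤ T.slope R'' v w :=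
              fun r hr => hwmax r (Finset.mem_filter.2 ⟨Finset.mem_univ r, hr⟩)
            have hR''v : R'' v = R' v := hR''nS v hvS
            by_cases hlow : R'' w < R'' v
            · have hwS : w ∈ S := by
                by_contra hwS
                have hw' : R'' w = R' w := hR''nS w hwS
                by_cases hwP : w ∈ P
                · have := hP.2.2.1 v hvP w hwP
                  rw [hR''v, hw'] at hlow; linarith
                · have hN : w ∈ T.Nbhd P := ⟨hwP, v, hvP, T.adj_symm _ _ hadjvw⟩
                  have := hP.2.2.2 v hvP w hN
                  rw [hR''v, hw'] at hlow; linarith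
              have hsdn'' : T.SDN R'' v w :=
                ⟨hadjvw, T.slope_nonneg_of_le hadjvw hlow.le, hmax⟩
              exact T.flowStep_ws (T.sdn_flowStep hsdn'') (hWSS w hwS)
            · push_neg at hlow
              have hslw : T.slope R'' v w ≤ 0 :=
                div_nonpos_of_nonpos_of_nonneg (by linarith) (T.hdist_pos' hadjvw).le
              have hv'le : R'' v' ≤ R' v :=
                (hR''le v').trans_eq (hP.2.2.1 v' hv'P v hvP)
              have hvlev' : R'' v ≤ R'' v' := by
                by_contra hgt
                push_neg at hgt
                have h3 : 0 < T.slope R'' v v' := div_pos (by linarith) hd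
                have h4 := hmax v' hadjvv'
                linarith
              have heq : R'' v' = R'' v := le_antisymm (hv'le.trans_eq hR''v.symm) hvlev'
              have hsdn'' : T.SDN R'' v v' := by
                refine ⟨hadjvv', T.slope_nonneg_of_le hadjvv' heq.le, ?_⟩
                intro r hr
                have h0 : T.slope R'' v v' = 0 := by
                  simp [ImpTerrain.slope, heq]
                rw [h0]
                exact (hmax r hr).trans hslw
              exact T.flowStep_ws (T.sdn_flowStep hsdn'') ih2
      · -- steepest-descent case
        have hadj := hsdn.1
        have hd := T.hdist_pos' hadj
        have hR''u : R'' u = R' u := hR''nS u huS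
        have hmono : T.slope R' u c ≤ T.slope R'' u c :=
          T.slope_mono hadj (le_of_eq hR''u.symm) (hR''le c)
        obtain ⟨w, hwN, hwmax⟩ :=
          Finset.exists_max_image (Finset.univ.filter fun r => T.adj u r)
            (fun r => T.slope R'' u r)
            ⟨c, Finset.mem_filter.2 ⟨Finset.mem_univ _, hadj⟩⟩
        have hadjuw : T.adj u w := (Finset.mem_filter.1 hwN).2
        have hmax : ∀ r, T.adj u r → T.slope R'' u r ≤ T.slope R'' u w :=
          fun r hr => hwmax r (Finset.mem_filter.2 ⟨Finset.mem_univ r, hr⟩)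
        have hw0 : 0 ≤ T.slope R'' u w :=
          le_trans (le_trans hsdn.2.1 hmono) (hmax c hadj)
        by_cases hwS : w ∈ S
        · have hsdn'' : T.SDN R'' u w := ⟨hadjuw, hw0, hmax⟩
          exact T.flowStep_ws (T.sdn_flowStep hsdn'') (hWSS w hwS)
        · have heqw : T.slope R'' u w = T.slope R' u w := by
            simp only [ImpTerrain.slope, hR''u, hR''nS w hwS]
          have hcmax : ∀ r, T.adj u r → T.slope R'' u r ≤ T.slope R'' u c := by
            intro r hr
            calc T.slope R'' u r ≤ T.slope R'' u w := hmax r hr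
              _ = T.slope R' u w := heqw
              _ ≤ T.slope R' u c := hsdn.2.2 w hadjuw
              _ ≤ T.slope R'' u c := hmono
          have hsdn'' : T.SDN R'' u c := ⟨hadj, le_trans hsdn.2.1 hmono, hcmax⟩
          exact T.flowStep_ws (T.sdn_flowStep hsdn'') ih

lemma chain'_flowsTo {R : V → ℝ} {L : List V}
    (h : L.Chain' fun p q => T.SDN R p q) {n m : ℕ} (hn : n ≤ m) :
    ∀ hm : m < L.length, T.FlowsTo R (L.get ⟨n, lt_of_le_of_lt hn hm⟩) (L.get ⟨m, hm⟩) := by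
  induction m, hn using Nat.le_induction with
  | base => intro hm; exact Relation.ReflTransGen.refl
  | succ m hm ih =>
    intro hm1
    have hmlt : m < L.length := Nat.lt_of_succ_lt hm1
    have hstep : T.SDN R (L.get ⟨m, hmlt⟩) (L.get ⟨m + 1, hm1⟩) :=
      List.isChain_iff_getElem.1 h m (by omega)
    exact Relation.ReflTransGen.tail (ih hmlt) (T.sdn_flowStep hstep)

end ImpTerrain

/-- On a regular terrain, the intersection of the persistent watersheds of all
nonempty subsets of an imprecise minimum `S` equals the persistent watershed of
any proxy of `S`. -/
theorem stmt9 {V : Type} [Fintype V] [DecidableEq V] (T : ImpTerrain V)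
    (hle : ∀ v, T.low v ≤ T.high v) (hreg : T.Regular)
    (S : Set V) (hS : T.ImpreciseMin S) (x : V) (hx : T.IsProxy S x) :
    (⋂ Q ∈ {Q : Set V | Q ⊆ S ∧ Q.Nonempty}, T.PsWS Q) = T.PsWS {x} := by
  obtain ⟨hxS, hxprox⟩ := hx
  have hSloc := T.regular_localMin_low hle hreg hS
  apply Set.Subset.antisymm
  · exact Set.biInter_subset_of_mem ⟨Set.singleton_subset_iff.2 hxS, x, rfl⟩
  · intro p hp
    rw [Set.mem_iInter₂]
    intro Q hQ
    obtain ⟨hQS, hQne⟩ := hQ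
    obtain ⟨q0, hq0⟩ := hQne
    simp only [ImpTerrain.PsWS, Set.mem_compl_iff] at hp ⊢
    intro hmem
    obtain ⟨R, hR, L, hL, s, hsc, i, j, hij, hgi, hgj, havoid⟩ := hmem
    by_cases hex : ∃ k : Fin L.length, (i:ℕ) ≤ (k:ℕ) ∧ (k:ℕ) ≤ (j:ℕ) ∧ L.get k = x
    · obtain ⟨k, hik, hkj, hkx⟩ := hex
      have hflowxs : T.FlowsTo R (L.get k) (L.get j) :=
        T.chain'_flowsTo hL.2.1 hkj j.isLt
      rw [hkx, hgj] at hflowxs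
      have hsS : s ∈ S := by
        by_contra hns
        exact hxprox R hR s hns hflowxs
      exact hsc ⟨T.low, fun v => ⟨le_rfl, hle v⟩, q0, hq0,
        T.localMin_flowsTo hSloc hsS (hQS hq0)⟩
    · refine hp ⟨R, hR, L, hL, s, ?_, i, j, hij, hgi, hgj, ?_⟩
      · intro hsx
        exact hsc (T.proxy_pows_subset hle hreg hS ⟨hxS, hxprox⟩ hQS ⟨q0, hq0⟩ hsx)
      · intro k h1 h2 hk
        exact hex ⟨k, h1, h2, Set.mem_singleton_iff.1 hk⟩
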